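/- Let (F,Ω,⋆) be a stratified fusion system on a group S, let V ≤ S, and set R = N_S(V). For each subgroup X ≤ R set X• = (VX)⋆ ∩ R (here VX is a subgroup since X normalizes V), and set N_Ω(V) = {X• : X ≤ R}. Then: (a) (N_Ω(V),•) is a stratification on the fusion system N_F(V) on R; (b) the map X ↦ X⋆ is an injective homomorphism of posets N_Ω(V) → Ω; (c) if the maximal length dim(N_Ω(V)) of a strictly increasing chain in N_Ω(V) equals dim(Ω), then V ≤ 1⋆ and R⋆ = S, where 1 denotes the trivial subgroup of S. -/

import Mathlib

/-- `F f X Y` asserts that the function `f : S → S` (through its restriction to `X`)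
is an `F`-homomorphism from the subgroup `X` to the subgroup `Y`. -/
abbrev HomPred (S : Type*) [Group S] := (S → S) → Subgroup S → Subgroup S → Prop

/-- A fusion system, with hom-sets given by `F · X Y`, on the subgroup `T`
of the ambient group `S`.  Morphisms are represented by functions `S → S`,
two functions agreeing on `X` representing the same morphism `X → Y`. -/
structure IsFusionSystem {S : Type*} [Group S] (T : Subgroup S) (F : HomPred S) : Prop where
  le_base : ∀ f X Y, F f X Y → X ≤ T ∧ Y ≤ T
  mapsTo : ∀ f X Y, F f X Y → Set.MapsTo f (X : Set S) (Y : Set S)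
  injOn : ∀ f X Y, F f X Y → Set.InjOn f (X : Set S)
  map_mul' : ∀ f X Y, F f X Y → ∀ x ∈ X, ∀ y ∈ X, f (x * y) = f x * f y
  of_eqOn : ∀ f g X Y, F f X Y → Set.EqOn g f (X : Set S) → F g X Y
  conj_mem : ∀ g ∈ T, ∀ X Y : Subgroup S, X ≤ T → Y ≤ T →
    (∀ x ∈ X, g⁻¹ * x * g ∈ Y) → F (fun x => g⁻¹ * x * g) X Y
  comp_mem : ∀ f g X Y Z, F f X Y → F g Y Z → F (g ∘ f) X Z
  restrict_mem : ∀ f X Y X₀ Y₀, F f X Y → X₀ ≤ X → Y₀ ≤ Y →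
    Set.MapsTo f (X₀ : Set S) (Y₀ : Set S) → F f X₀ Y₀
  corestrict_mem : ∀ f X Y, F f X Y → F f X (Subgroup.closure (f '' (X : Set S)))
  inv_mem : ∀ f X Y, F f X Y →
    ∃ g, F g (Subgroup.closure (f '' (X : Set S))) X ∧ ∀ x ∈ X, g (f x) = x

variable {S : Type*} [Group S]

/-- `f` is an `F`-isomorphism from `X` onto `Y`. -/
def IsFIso (F : HomPred S) (f : S → S) (X Y : Subgroup S) : Prop :=
  F f X Y ∧ f '' (X : Set S) = (Y : Set S)

/-- `X^F`, the set of `F`-conjugates of `X`. -/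
def FConj (F : HomPred S) (X : Subgroup S) : Set (Subgroup S) :=
  {Y | ∃ f, IsFIso F f X Y}

/-- `N` is normal in the fusion system `F` on the base subgroup `T`:
`N` is normal in `T` and every `F`-isomorphism `X → Y` extends to an
`F`-isomorphism `XN → YN` mapping `N` onto `N`. -/
def NormalInF (T : Subgroup S) (F : HomPred S) (N : Subgroup S) : Prop :=
  N ≤ T ∧ (∀ g ∈ T, ∀ n ∈ N, g⁻¹ * n * g ∈ N) ∧
    ∀ f X Y, IsFIso F f X Y →
      ∃ g, IsFIso F g (X ⊔ N) (Y ⊔ N) ∧ Set.EqOn g f (X : Set S) ∧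
        g '' (N : Set S) = (N : Set S)

/-- The supremum of the lengths of strictly increasing chains in `Ω`
terminating in `A`. -/
noncomputable def dimEnd (Ω : Set (Subgroup S)) (A : Subgroup S) : ℕ :=
  sSup {n | ∃ c : Fin (n + 1) → Subgroup S,
    StrictMono c ∧ (∀ i, c i ∈ Ω) ∧ c (Fin.last n) = A}

/-- The supremum of the lengths of strictly increasing chains in `Ω`. -/
noncomputable def dimOmega (Ω : Set (Subgroup S)) : ℕ :=
  sSup {n | ∃ c : Fin (n + 1) → Subgroup S, StrictMono c ∧ ∀ i, c i ∈ Ω}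

/-- `(Ω, star)` is a stratification on the fusion system `F` on base `T`. -/
structure IsStratification (T : Subgroup S) (F : HomPred S)
    (Ω : Set (Subgroup S)) (star : Subgroup S → Subgroup S) : Prop where
  omega_le : ∀ A ∈ Ω, A ≤ T
  star_mem : ∀ X : Subgroup S, X ≤ T → star X ∈ Ω
  star_fix : ∀ A ∈ Ω, star A = A
  star_mono : ∀ X Y : Subgroup S, X ≤ T → Y ≤ T → X ≤ Y → star X ≤ star Y
  finDim : ∃ N : ℕ, ∀ n : ℕ,
    (∃ c : Fin (n + 1) → Subgroup S, StrictMono c ∧ ∀ i, c i ∈ Ω) → n ≤ N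
  conj_invariant : ∀ A ∈ Ω, ∀ f Y, IsFIso F f A Y → Y ∈ Ω
  le_star : ∀ X : Subgroup S, X ≤ T → X ≤ star X
  extend_star : ∀ f X Y, IsFIso F f X Y →
    ∃ g, IsFIso F g (star X) (star Y) ∧ Set.EqOn g f (X : Set S)

/-- `dim_Ω(X)`, the supremum of the lengths of strictly increasing chains
in `Ω` terminating in `X⋆`. -/
noncomputable def dimStar (Ω : Set (Subgroup S)) (star : Subgroup S → Subgroup S)
    (X : Subgroup S) : ℕ :=
  dimEnd Ω (star X)

/-- `V` is fully normalized in the stratified fusion system `(F, Ω, star)` on base `T`. -/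
def FullyNormalizedIn (T : Subgroup S) (F : HomPred S) (Ω : Set (Subgroup S))
    (star : Subgroup S → Subgroup S) (V : Subgroup S) : Prop :=
  ∀ U ∈ FConj F V, dimStar Ω star ((Subgroup.normalizer (U : Set S)) ⊓ T) ≤ dimStar Ω star ((Subgroup.normalizer (V : Set S)) ⊓ T)

/-- `V` is fully centralized in the stratified fusion system `(F, Ω, star)` on base `T`. -/
def FullyCentralizedIn (T : Subgroup S) (F : HomPred S) (Ω : Set (Subgroup S))
    (star : Subgroup S → Subgroup S) (V : Subgroup S) : Prop :=
  ∀ U ∈ FConj F V,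
    dimStar Ω star ((Subgroup.centralizer (U : Set S) ⊓ T) ⊔ U) ≤
      dimStar Ω star ((Subgroup.centralizer (V : Set S) ⊓ T) ⊔ V)

/-- `Γ` is an `F`-closed set of subgroups. -/
def FClosed (F : HomPred S) (Γ : Set (Subgroup S)) : Prop :=
  Γ.Nonempty ∧ (∀ X ∈ Γ, ∀ Y ∈ FConj F X, Y ∈ Γ) ∧
    ∀ X ∈ Γ, ∀ Y : Subgroup S, X ≤ Y → Y ∈ Γ

/-- `Y` is normalizer-inductive in the fusion system `F` on base `T`. -/
def NormalizerInductive (T : Subgroup S) (F : HomPred S) (Y : Subgroup S) : Prop :=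
  ∀ X ∈ FConj F Y, ∃ φ, F φ ((Subgroup.normalizer (X : Set S)) ⊓ T) ((Subgroup.normalizer (Y : Set S)) ⊓ T) ∧
    φ '' (X : Set S) = (Y : Set S)

/-- `Y` is centralizer-inductive in the fusion system `F` on base `T`. -/
def CentralizerInductive (T : Subgroup S) (F : HomPred S) (Y : Subgroup S) : Prop :=
  ∀ X ∈ FConj F Y, ∃ ψ,
    F ψ ((Subgroup.centralizer (X : Set S) ⊓ T) ⊔ X)
        ((Subgroup.centralizer (Y : Set S) ⊓ T) ⊔ Y) ∧
    ψ '' (X : Set S) = (Y : Set S)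

/-- `F` is `Γ`-inductive. -/
def GammaInductive (T : Subgroup S) (F : HomPred S) (Γ : Set (Subgroup S)) : Prop :=
  ∀ X ∈ Γ, ∃ Y ∈ FConj F X, NormalizerInductive T F Y

/-- `F` is inductive (i.e. `Sub(T)`-inductive). -/
def InductiveFS (T : Subgroup S) (F : HomPred S) : Prop :=
  ∀ X : Subgroup S, X ≤ T → ∃ Y ∈ FConj F X, NormalizerInductive T F Y

/-- `⟨Φ⟩_T`: the smallest fusion system on `T` all of whose homomorphisms are
`Famb`-homomorphisms and whose hom-sets contain `Φ`. -/
def GenFS (T : Subgroup S) (Famb : HomPred S) (Φ : HomPred S) : HomPred S :=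
  fun f X Y => ∀ E : HomPred S, IsFusionSystem T E →
    (∀ g A B, E g A B → Famb g A B) → (∀ g A B, Φ g A B → E g A B) → E f X Y

/-- The generating set `Φ` for `N_F(V)`: `F`-isomorphisms between subgroups of
`N_S(V)` extending to `F`-isomorphisms `XV → YV` restricting to an automorphism of `V`. -/
def NPhi (F : HomPred S) (V : Subgroup S) : HomPred S :=
  fun f X Y => X ≤ (Subgroup.normalizer (V : Set S)) ∧ Y ≤ (Subgroup.normalizer (V : Set S)) ∧ IsFIso F f X Y ∧
    ∃ g, IsFIso F g (X ⊔ V) (Y ⊔ V) ∧ Set.EqOn g f (X : Set S) ∧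
      g '' (V : Set S) = (V : Set S)

/-- The fusion system `N_F(V)` on `N_S(V)`. -/
def NFus (F : HomPred S) (V : Subgroup S) : HomPred S :=
  GenFS (Subgroup.normalizer (V : Set S)) F (NPhi F V)

/-- The generating set `Ψ` for `C_F(V)`: `F`-isomorphisms between subgroups of
`C_S(V)` extending to `F`-isomorphisms `XV → YV` restricting to the identity on `V`. -/
def CPsi (F : HomPred S) (V : Subgroup S) : HomPred S :=
  fun f X Y => X ≤ Subgroup.centralizer (V : Set S) ∧
    Y ≤ Subgroup.centralizer (V : Set S) ∧ IsFIso F f X Y ∧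
    ∃ g, IsFIso F g (X ⊔ V) (Y ⊔ V) ∧ Set.EqOn g f (X : Set S) ∧ ∀ v ∈ V, g v = v

/-- The fusion system `C_F(V)` on `C_S(V)`. -/
def CFus (F : HomPred S) (V : Subgroup S) : HomPred S :=
  GenFS (Subgroup.centralizer (V : Set S)) F (CPsi F V)

/-- `X ↦ X• = (VX)⋆ ⊓ N_S(V)`. -/
def bulletStar (star : Subgroup S → Subgroup S) (V : Subgroup S) :
    Subgroup S → Subgroup S :=
  fun X => star (V ⊔ X) ⊓ (Subgroup.normalizer (V : Set S))

/-- `N_Ω(V) = {X• : X ≤ N_S(V)}`. -/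
def bulletOmega (star : Subgroup S → Subgroup S) (V : Subgroup S) : Set (Subgroup S) :=
  {A | ∃ X : Subgroup S, X ≤ (Subgroup.normalizer (V : Set S)) ∧ A = bulletStar star V X}

/-- `A ↦ A° = (VA)⋆ ⊓ C_S(V)`. -/
def circStar (star : Subgroup S → Subgroup S) (V : Subgroup S) :
    Subgroup S → Subgroup S :=
  fun A => star (V ⊔ A) ⊓ Subgroup.centralizer (V : Set S)

/-- `C_Ω(V) = {A° : A ≤ C_S(V)}`. -/
def circOmega (star : Subgroup S → Subgroup S) (V : Subgroup S) : Set (Subgroup S) :=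
  {A | ∃ X : Subgroup S, X ≤ Subgroup.centralizer (V : Set S) ∧ A = circStar star V X}

/-- `T` is strongly closed in `F`. -/
def StronglyClosedF (F : HomPred S) (T : Subgroup S) : Prop :=
  ∀ X : Subgroup S, X ≤ T → ∀ Y ∈ FConj F X, Y ≤ T

section NFAux

variable {S : Type*} [Group S] {F : HomPred S}

lemma nfs_map_one {T : Subgroup S} (hF : IsFusionSystem T F) {f : S → S}
    {X Y : Subgroup S} (h : F f X Y) : f 1 = 1 := by
  have h1 : f (1 * 1) = f 1 * f 1 := hF.map_mul' f X Y h 1 X.one_mem 1 X.one_mem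
  rw [mul_one] at h1
  have h2 : f 1 * 1 = f 1 * f 1 := by rw [mul_one]; exact h1
  exact (mul_left_cancel h2).symm

lemma nfs_map_inv {T : Subgroup S} (hF : IsFusionSystem T F) {f : S → S}
    {X Y : Subgroup S} (h : F f X Y) {x : S} (hx : x ∈ X) : f x⁻¹ = (f x)⁻¹ := by
  have h1 : f (x⁻¹ * x) = f x⁻¹ * f x := hF.map_mul' f X Y h _ (X.inv_mem hx) _ hx
  rw [inv_mul_cancel, nfs_map_one hF h] at h1
  exact eq_inv_of_mul_eq_one_left h1.symm

lemma nfs_mapsTo_sup {T : Subgroup S} (hF : IsFusionSystem T F) {f : S → S}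
    {X Y A B C : Subgroup S} (h : F f X Y) (hA : A ≤ X) (hB : B ≤ X)
    (hAC : ∀ a ∈ A, f a ∈ C) (hBC : ∀ b ∈ B, f b ∈ C) :
    ∀ s ∈ A ⊔ B, f s ∈ C := by
  let K : Subgroup S :=
    { carrier := {s | s ∈ X ∧ f s ∈ C}
      one_mem' := ⟨X.one_mem, by rw [nfs_map_one hF h]; exact C.one_mem⟩
      mul_mem' := by
        intro a b ha hb
        exact ⟨X.mul_mem ha.1 hb.1, by
          rw [hF.map_mul' f X Y h a ha.1 b hb.1]; exact C.mul_mem ha.2 hb.2⟩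
      inv_mem' := by
        intro a ha
        exact ⟨X.inv_mem ha.1, by rw [nfs_map_inv hF h ha.1]; exact C.inv_mem ha.2⟩ }
  intro s hs
  have hle : A ⊔ B ≤ K :=
    sup_le (fun a ha => ⟨hA ha, hAC a ha⟩) (fun b hb => ⟨hB hb, hBC b hb⟩)
  exact (hle hs).2

lemma nfs_image_subgroup {T : Subgroup S} (hF : IsFusionSystem T F) {f : S → S}
    {X Y : Subgroup S} (h : F f X Y) :
    ∃ I : Subgroup S, (I : Set S) = f '' (X : Set S) := by
  refine ⟨{ carrier := f '' (X : Set S)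
            one_mem' := ⟨1, X.one_mem, nfs_map_one hF h⟩
            mul_mem' := ?_
            inv_mem' := ?_ }, rfl⟩
  · intro a b ha hb
    obtain ⟨x, hx, rfl⟩ := ha
    obtain ⟨y, hy, rfl⟩ := hb
    exact ⟨x * y, X.mul_mem hx hy, hF.map_mul' f X Y h x hx y hy⟩
  · intro a ha
    obtain ⟨x, hx, rfl⟩ := ha
    exact ⟨x⁻¹, X.inv_mem hx, nfs_map_inv hF h hx⟩

/-- The canonical fusion-system candidate for `N_F(V)`. -/
def NE (F : HomPred S) (V : Subgroup S) : HomPred S := fun f X Y =>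
  X ≤ (Subgroup.normalizer (V : Set S)) ∧ Y ≤ (Subgroup.normalizer (V : Set S)) ∧ F f X Y ∧
    ∃ g, F g (X ⊔ V) (Y ⊔ V) ∧ Set.EqOn g f (X : Set S) ∧
      g '' (V : Set S) = (V : Set S)

lemma nfs_conj_mem_normalizer {V : Subgroup S} {g v : S} (hg : g ∈ (Subgroup.normalizer (V : Set S)))
    (hv : v ∈ V) : g⁻¹ * v * g ∈ V := by
  have := (Subgroup.mem_normalizer_iff.mp ((Subgroup.normalizer (V : Set S)).inv_mem hg) v).mp hv
  simpa using this

lemma isFS_NE (hF : IsFusionSystem ⊤ F) (V : Subgroup S) :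
    IsFusionSystem (Subgroup.normalizer (V : Set S)) (NE F V) := by
  constructor
  · exact fun f X Y h => ⟨h.1, h.2.1⟩
  · exact fun f X Y h => hF.mapsTo f X Y h.2.2.1
  · exact fun f X Y h => hF.injOn f X Y h.2.2.1
  · exact fun f X Y h => hF.map_mul' f X Y h.2.2.1
  · -- of_eqOn
    intro f g X Y h heq
    obtain ⟨hX, hY, hfF, g₀, hg₀, hEq, hVim⟩ := h
    exact ⟨hX, hY, hF.of_eqOn f g X Y hfF heq,
      g₀, hg₀, fun x hx => (hEq hx).trans (heq hx).symm, hVim⟩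
  · -- conj_mem
    intro g hg X Y hX hY hconj
    have hconjV : ∀ v ∈ V, g⁻¹ * v * g ∈ V := fun v hv => nfs_conj_mem_normalizer hg hv
    have hbig : F (fun x => g⁻¹ * x * g) (X ⊔ V) ⊤ :=
      hF.conj_mem g (Subgroup.mem_top g) (X ⊔ V) ⊤ le_top le_top
        (fun x _ => Subgroup.mem_top _)
    have hmt : ∀ s ∈ X ⊔ V, (fun x => g⁻¹ * x * g) s ∈ Y ⊔ V :=
      nfs_mapsTo_sup hF hbig le_sup_left le_sup_right
        (fun a ha => Subgroup.mem_sup_left (hconj a ha))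
        (fun b hb => Subgroup.mem_sup_right (hconjV b hb))
    refine ⟨hX, hY, hF.conj_mem g (Subgroup.mem_top g) X Y le_top le_top hconj,
      fun x => g⁻¹ * x * g,
      hF.conj_mem g (Subgroup.mem_top g) (X ⊔ V) (Y ⊔ V) le_top le_top hmt,
      fun x _ => rfl, ?_⟩
    apply Set.Subset.antisymm
    · rintro _ ⟨v, hv, rfl⟩
      exact hconjV v hv
    · intro v hv
      refine ⟨g * v * g⁻¹, (Subgroup.mem_normalizer_iff.mp hg v).mp hv, by group⟩
  · -- comp_mem
    intro f g X Y Z hf hg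
    obtain ⟨hX, hY, hfF, g₁, hg₁, hEq₁, hV₁⟩ := hf
    obtain ⟨_, hZ, hgF, g₂, hg₂, hEq₂, hV₂⟩ := hg
    refine ⟨hX, hZ, hF.comp_mem f g X Y Z hfF hgF,
      g₂ ∘ g₁, hF.comp_mem g₁ g₂ _ _ _ hg₁ hg₂, ?_, ?_⟩
    · intro x hx
      have hfx : f x ∈ Y := hF.mapsTo f X Y hfF hx
      show g₂ (g₁ x) = g (f x)
      rw [hEq₁ hx, hEq₂ hfx]
    · rw [Set.image_comp, hV₁, hV₂]
  · -- restrict_mem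
    intro f X Y X₀ Y₀ h hX₀ hY₀ hmt
    obtain ⟨hX, hY, hfF, g₀, hg₀, hEq, hVim⟩ := h
    have hmt' : ∀ s ∈ X₀ ⊔ V, g₀ s ∈ Y₀ ⊔ V := by
      refine nfs_mapsTo_sup hF hg₀ (le_trans hX₀ le_sup_left) le_sup_right ?_ ?_
      · intro a ha
        have hga : g₀ a = f a := hEq (hX₀ ha)
        rw [hga]
        exact Subgroup.mem_sup_left (hmt ha)
      · intro b hb
        have : g₀ b ∈ (V : Set S) := by rw [← hVim]; exact ⟨b, hb, rfl⟩
        exact Subgroup.mem_sup_right this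
    refine ⟨le_trans hX₀ hX, le_trans hY₀ hY,
      hF.restrict_mem f X Y X₀ Y₀ hfF hX₀ hY₀ hmt,
      g₀, hF.restrict_mem g₀ (X ⊔ V) (Y ⊔ V) (X₀ ⊔ V) (Y₀ ⊔ V) hg₀
        (sup_le_sup_right hX₀ V) (sup_le_sup_right hY₀ V) hmt',
      fun x hx => hEq (hX₀ hx), hVim⟩
  · -- corestrict_mem
    intro f X Y h
    obtain ⟨hX, hY, hfF, g₀, hg₀, hEq, hVim⟩ := h
    have hY₁Y : Subgroup.closure (f '' (X : Set S)) ≤ Y :=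
      (Subgroup.closure_le Y).mpr (fun y hy => by
        obtain ⟨x, hx, rfl⟩ := hy; exact hF.mapsTo f X Y hfF hx)
    have hmt' : ∀ s ∈ X ⊔ V, g₀ s ∈ Subgroup.closure (f '' (X : Set S)) ⊔ V := by
      refine nfs_mapsTo_sup hF hg₀ le_sup_left le_sup_right ?_ ?_
      · intro a ha
        have hga : g₀ a = f a := hEq ha
        rw [hga]
        exact Subgroup.mem_sup_left (Subgroup.subset_closure ⟨a, ha, rfl⟩)
      · intro b hb
        have : g₀ b ∈ (V : Set S) := by rw [← hVim]; exact ⟨b, hb, rfl⟩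
        exact Subgroup.mem_sup_right this
    refine ⟨hX, le_trans hY₁Y hY, hF.corestrict_mem f X Y hfF,
      g₀, hF.restrict_mem g₀ (X ⊔ V) (Y ⊔ V) (X ⊔ V) _ hg₀ le_rfl
        (sup_le_sup_right hY₁Y V) hmt', hEq, hVim⟩
  · -- inv_mem
    intro f X Y h
    obtain ⟨hX, hY, hfF, g₀, hg₀, hEq, hVim⟩ := h
    set Y₁ := Subgroup.closure (f '' (X : Set S)) with hY₁def
    obtain ⟨fi, hfiF, hfi⟩ := hF.inv_mem f X Y hfF
    obtain ⟨gb, hgbF, hgb⟩ := hF.inv_mem g₀ (X ⊔ V) (Y ⊔ V) hg₀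
    set W := Subgroup.closure (g₀ '' ((X ⊔ V : Subgroup S) : Set S)) with hWdef
    have hY₁Y : Y₁ ≤ Y :=
      (Subgroup.closure_le Y).mpr (fun y hy => by
        obtain ⟨x, hx, rfl⟩ := hy; exact hF.mapsTo f X Y hfF hx)
    have hY₁W : Y₁ ≤ W := by
      rw [hY₁def]
      refine (Subgroup.closure_le W).mpr ?_
      rintro _ ⟨x, hx, rfl⟩
      have hgx : g₀ x ∈ (W : Set S) :=
        Subgroup.subset_closure ⟨x, Subgroup.mem_sup_left hx, rfl⟩
      rw [← hEq hx]
      exact hgx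
    have hVW : V ≤ W := by
      intro v hv
      have hv' : v ∈ g₀ '' (V : Set S) := by rw [hVim]; exact hv
      obtain ⟨u, hu, rfl⟩ := hv'
      exact Subgroup.subset_closure ⟨u, Subgroup.mem_sup_right hu, rfl⟩
    -- gb agrees with fi on Y₁
    let K : Subgroup S :=
      { carrier := {y | y ∈ Y₁ ∧ gb y = fi y}
        one_mem' := ⟨Y₁.one_mem, by rw [nfs_map_one hF hgbF, nfs_map_one hF hfiF]⟩
        mul_mem' := by
          intro a b ha hb
          refine ⟨Y₁.mul_mem ha.1 hb.1, ?_⟩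
          rw [hF.map_mul' gb _ _ hgbF a (hY₁W ha.1) b (hY₁W hb.1),
            hF.map_mul' fi _ _ hfiF a ha.1 b hb.1, ha.2, hb.2]
        inv_mem' := by
          intro a ha
          refine ⟨Y₁.inv_mem ha.1, ?_⟩
          rw [nfs_map_inv hF hgbF (hY₁W ha.1), nfs_map_inv hF hfiF ha.1, ha.2] }
    have hKle : Y₁ ≤ K := by
      rw [hY₁def]
      refine (Subgroup.closure_le K).mpr ?_
      rintro _ ⟨x, hx, rfl⟩
      refine ⟨Subgroup.subset_closure ⟨x, hx, rfl⟩, ?_⟩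
      have h1 : gb (f x) = x := by rw [← hEq hx]; exact hgb x (Subgroup.mem_sup_left hx)
      rw [h1, hfi x hx]
    have hEqOn : Set.EqOn gb fi (Y₁ : Set S) := fun y hy => (hKle hy).2
    have hgbV : gb '' (V : Set S) = (V : Set S) := by
      apply Set.Subset.antisymm
      · rintro _ ⟨v', hv', rfl⟩
        have hv'' : v' ∈ g₀ '' (V : Set S) := by rw [hVim]; exact hv'
        obtain ⟨u, hu, rfl⟩ := hv''
        rw [hgb u (Subgroup.mem_sup_right hu)]
        exact hu
      · intro v hv
        refine ⟨g₀ v, ?_, hgb v (Subgroup.mem_sup_right hv)⟩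
        rw [← hVim]
        exact ⟨v, hv, rfl⟩
    refine ⟨fi, ⟨le_trans hY₁Y hY, hX, hfiF,
      gb, hF.restrict_mem gb W (X ⊔ V) (Y₁ ⊔ V) (X ⊔ V) hgbF (sup_le hY₁W hVW) le_rfl
        (fun s hs => hF.mapsTo gb W (X ⊔ V) hgbF ((sup_le hY₁W hVW) hs)),
      hEqOn, hgbV⟩, hfi⟩

end NFAux
section NFAux2

variable {S : Type*} [Group S] {F : HomPred S}

lemma NPhi_le_NE {V : Subgroup S} {f : S → S} {X Y : Subgroup S}
    (h : NPhi F V f X Y) : NE F V f X Y := by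
  obtain ⟨hX, hY, hiso, g, hgiso, hEq, hVim⟩ := h
  exact ⟨hX, hY, hiso.1, g, hgiso.1, hEq, hVim⟩

lemma NFus_le_NE (hF : IsFusionSystem ⊤ F) {V : Subgroup S} {f : S → S}
    {X Y : Subgroup S} (h : NFus F V f X Y) : NE F V f X Y :=
  h (NE F V) (isFS_NE hF V) (fun _ _ _ h' => h'.2.2.1) (fun _ _ _ h' => NPhi_le_NE h')

lemma NPhi_le_NFus {V : Subgroup S} {f : S → S} {X Y : Subgroup S}
    (h : NPhi F V f X Y) : NFus F V f X Y :=
  fun _ _ _ hΦ => hΦ f X Y h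

/-- An `N_F(V)`-isomorphism extends to an `F`-isomorphism `X ⊔ V → Y ⊔ V`
mapping `V` onto `V`. -/
lemma nfus_iso_extend (hF : IsFusionSystem ⊤ F) {V : Subgroup S} {f : S → S}
    {X Y : Subgroup S} (h : IsFIso (NFus F V) f X Y) :
    X ≤ (Subgroup.normalizer (V : Set S)) ∧ Y ≤ (Subgroup.normalizer (V : Set S)) ∧
      ∃ g, IsFIso F g (X ⊔ V) (Y ⊔ V) ∧ Set.EqOn g f (X : Set S) ∧
        g '' (V : Set S) = (V : Set S) := by
  obtain ⟨hX, hY, hfF, g, hg, heq, hgV⟩ := NFus_le_NE hF h.1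
  refine ⟨hX, hY, g, ⟨hg, ?_⟩, heq, hgV⟩
  obtain ⟨I, hI⟩ := nfs_image_subgroup hF hg
  apply Set.Subset.antisymm ((hF.mapsTo g _ _ hg).image_subset)
  have hYI : Y ≤ I := by
    intro y hy
    have hy' : y ∈ f '' (X : Set S) := by rw [h.2]; exact hy
    obtain ⟨x, hx, rfl⟩ := hy'
    show f x ∈ (I : Set S)
    rw [hI]
    exact ⟨x, Subgroup.mem_sup_left hx, heq hx⟩
  have hVI : V ≤ I := by
    intro v hv
    have hv' : v ∈ g '' (V : Set S) := by rw [hgV]; exact hv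
    obtain ⟨u, hu, rfl⟩ := hv'
    show g u ∈ (I : Set S)
    rw [hI]
    exact ⟨u, Subgroup.mem_sup_right hu, rfl⟩
  intro s hs
  have hsI : s ∈ I := (sup_le hYI hVI) hs
  rw [← hI]
  exact hsI

/-- Transport of the normalizer along an `F`-isomorphism fixing `V` setwise. -/
lemma normalizer_transfer (hF : IsFusionSystem ⊤ F) {hh : S → S} {P Q V : Subgroup S}
    (hiso : IsFIso F hh P Q) (hVP : V ≤ P) (hV : hh '' (V : Set S) = (V : Set S)) :
    hh '' ((P ⊓ (Subgroup.normalizer (V : Set S)) : Subgroup S) : Set S)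
      = ((Q ⊓ (Subgroup.normalizer (V : Set S)) : Subgroup S) : Set S) := by
  obtain ⟨hhF, him⟩ := hiso
  have hmul : ∀ a ∈ P, ∀ b ∈ P, hh (a * b) = hh a * hh b := hF.map_mul' _ _ _ hhF
  have hinv : ∀ a ∈ P, hh a⁻¹ = (hh a)⁻¹ := fun a ha => nfs_map_inv hF hhF ha
  have hinj := hF.injOn _ _ _ hhF
  have hconj : ∀ x ∈ P, ∀ b ∈ P, hh (x * b * x⁻¹) = hh x * hh b * (hh x)⁻¹ := by
    intro x hx b hb
    rw [hmul _ (P.mul_mem hx hb) _ (P.inv_mem hx), hmul _ hx _ hb, hinv _ hx]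
  have key : ∀ x ∈ P, (x ∈ (Subgroup.normalizer (V : Set S)) ↔ hh x ∈ (Subgroup.normalizer (V : Set S))) := by
    intro x hxP
    constructor
    · intro hxR
      rw [Subgroup.mem_normalizer_iff]
      intro b
      constructor
      · intro hb
        have hb' : b ∈ hh '' (V : Set S) := by rw [hV]; exact hb
        obtain ⟨v, hv, rfl⟩ := hb'
        have hxv : x * v * x⁻¹ ∈ V := (Subgroup.mem_normalizer_iff.mp hxR v).mp hv
        have hmem : hh (x * v * x⁻¹) ∈ (V : Set S) := by
          rw [← hV]; exact ⟨_, hxv, rfl⟩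
        rw [hconj x hxP v (hVP hv)] at hmem
        exact hmem
      · intro hb
        have hb' : hh x * b * (hh x)⁻¹ ∈ hh '' (V : Set S) := by rw [hV]; exact hb
        obtain ⟨v, hv, hveq⟩ := hb'
        have hxv : x⁻¹ * v * x ∈ V := nfs_conj_mem_normalizer hxR hv
        have h1 : hh (x⁻¹ * v * x) = (hh x)⁻¹ * hh v * hh x := by
          rw [hmul _ (P.mul_mem (P.inv_mem hxP) (hVP hv)) _ hxP,
            hmul _ (P.inv_mem hxP) _ (hVP hv), hinv _ hxP]
        have h3 : b = hh (x⁻¹ * v * x) := by rw [h1, hveq]; group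
        have hbmem : b ∈ hh '' (V : Set S) := ⟨_, hxv, h3.symm⟩
        rw [hV] at hbmem
        exact hbmem
    · intro hxR
      rw [Subgroup.mem_normalizer_iff]
      intro b
      constructor
      · intro hb
        have h2 : hh b ∈ (V : Set S) := by rw [← hV]; exact ⟨b, hb, rfl⟩
        have h3 : hh x * hh b * (hh x)⁻¹ ∈ V :=
          (Subgroup.mem_normalizer_iff.mp hxR (hh b)).mp h2
        have h4 : hh (x * b * x⁻¹) ∈ hh '' (V : Set S) := by
          rw [hconj x hxP b (hVP hb), hV]; exact h3
        obtain ⟨v, hv, hveq⟩ := h4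
        have h5 : v = x * b * x⁻¹ :=
          hinj (hVP hv) (P.mul_mem (P.mul_mem hxP (hVP hb)) (P.inv_mem hxP)) hveq
        rw [← h5]
        exact hv
      · intro hb
        have hbP : b ∈ P := by
          have hbeq : b = x⁻¹ * (x * b * x⁻¹) * x := by group
          rw [hbeq]
          exact P.mul_mem (P.mul_mem (P.inv_mem hxP) (hVP hb)) hxP
        have h1 : hh (x * b * x⁻¹) ∈ (V : Set S) := by rw [← hV]; exact ⟨_, hb, rfl⟩
        rw [hconj x hxP b hbP] at h1
        have h3 : hh b ∈ V := (Subgroup.mem_normalizer_iff.mp hxR (hh b)).mpr h1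
        have h4 : hh b ∈ hh '' (V : Set S) := by rw [hV]; exact h3
        obtain ⟨v, hv, hveq⟩ := h4
        have h5 : v = b := hinj (hVP hv) hbP hveq
        rw [← h5]
        exact hv
  apply Set.Subset.antisymm
  · rintro _ ⟨s, hs, rfl⟩
    have hs' : s ∈ P ⊓ (Subgroup.normalizer (V : Set S)) := hs
    rw [Subgroup.mem_inf] at hs'
    show hh s ∈ Q ⊓ (Subgroup.normalizer (V : Set S))
    refine Subgroup.mem_inf.mpr ⟨?_, (key s hs'.1).mp hs'.2⟩
    have : hh s ∈ hh '' (P : Set S) := ⟨s, hs'.1, rfl⟩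
    rw [him] at this
    exact this
  · intro t ht
    have ht' : t ∈ Q ⊓ (Subgroup.normalizer (V : Set S)) := ht
    rw [Subgroup.mem_inf] at ht'
    have htQ : t ∈ hh '' (P : Set S) := by rw [him]; exact ht'.1
    obtain ⟨x, hx, rfl⟩ := htQ
    exact ⟨x, Subgroup.mem_inf.mpr ⟨hx, (key x hx).mpr ht'.2⟩, rfl⟩

end NFAux2
section NFAux3

variable {S : Type*} [Group S] {F : HomPred S} {Ω : Set (Subgroup S)}
  {star : Subgroup S → Subgroup S} {V : Subgroup S}

lemma sup_le_bullet (hΩ : IsStratification ⊤ F Ω star) {X : Subgroup S}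
    (hX : X ≤ (Subgroup.normalizer (V : Set S))) : V ⊔ X ≤ bulletStar star V X :=
  le_inf (hΩ.le_star (V ⊔ X) le_top) (sup_le Subgroup.le_normalizer hX)

lemma star_sup_bullet (hΩ : IsStratification ⊤ F Ω star) {X : Subgroup S}
    (hX : X ≤ (Subgroup.normalizer (V : Set S))) :
    star (V ⊔ bulletStar star V X) = star (V ⊔ X) := by
  apply le_antisymm
  · have h1 : V ⊔ bulletStar star V X ≤ star (V ⊔ X) :=
      sup_le (le_trans le_sup_left (hΩ.le_star _ le_top)) inf_le_left
    calc star (V ⊔ bulletStar star V X) ≤ star (star (V ⊔ X)) :=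
          hΩ.star_mono _ _ le_top le_top h1
      _ = star (V ⊔ X) := hΩ.star_fix _ (hΩ.star_mem _ le_top)
  · exact hΩ.star_mono _ _ le_top le_top
      (sup_le_sup_left (le_trans le_sup_right (sup_le_bullet hΩ hX)) V)

lemma V_le_bullet (hΩ : IsStratification ⊤ F Ω star) {X : Subgroup S}
    (hX : X ≤ (Subgroup.normalizer (V : Set S))) : V ≤ bulletStar star V X :=
  le_trans le_sup_left (sup_le_bullet hΩ hX)

lemma sup_bullet_eq (hΩ : IsStratification ⊤ F Ω star) {X : Subgroup S}
    (hX : X ≤ (Subgroup.normalizer (V : Set S))) : V ⊔ bulletStar star V X = bulletStar star V X :=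
  sup_eq_right.mpr (V_le_bullet hΩ hX)

lemma star_bullet (hΩ : IsStratification ⊤ F Ω star) {X : Subgroup S}
    (hX : X ≤ (Subgroup.normalizer (V : Set S))) : star (bulletStar star V X) = star (V ⊔ X) := by
  rw [← sup_bullet_eq hΩ hX, star_sup_bullet hΩ hX]

lemma bullet_idem (hΩ : IsStratification ⊤ F Ω star) {X : Subgroup S}
    (hX : X ≤ (Subgroup.normalizer (V : Set S))) :
    bulletStar star V (bulletStar star V X) = bulletStar star V X := by
  show star (V ⊔ bulletStar star V X) ⊓ (Subgroup.normalizer (V : Set S)) = bulletStar star V X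
  rw [star_sup_bullet hΩ hX]
  rfl

lemma bullet_eq_star_inf (hΩ : IsStratification ⊤ F Ω star) {X : Subgroup S}
    (hX : X ≤ (Subgroup.normalizer (V : Set S))) :
    bulletStar star V X = star (bulletStar star V X) ⊓ (Subgroup.normalizer (V : Set S)) := by
  rw [star_bullet hΩ hX]
  rfl

lemma bullet_star_injOn (hΩ : IsStratification ⊤ F Ω star) :
    Set.InjOn star (bulletOmega star V) := by
  rintro A ⟨X, hX, rfl⟩ B ⟨Y, hY, rfl⟩ hAB
  rw [bullet_eq_star_inf hΩ hX, bullet_eq_star_inf hΩ hY, hAB]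

lemma bullet_chain_strictMono (hΩ : IsStratification ⊤ F Ω star) {n : ℕ}
    {c : Fin (n + 1) → Subgroup S} (hc : StrictMono c)
    (hcΩ : ∀ i, c i ∈ bulletOmega star V) : StrictMono (fun i => star (c i)) := by
  intro i j hij
  refine lt_of_le_of_ne (hΩ.star_mono _ _ le_top le_top (hc hij).le) ?_
  intro he
  exact absurd (bullet_star_injOn hΩ (hcΩ i) (hcΩ j) he) (ne_of_lt (hc hij))

/-- The combined extension: an `N_F(V)`-isomorphism `X → Y` extends to an
`F`-isomorphism `(V ⊔ X)⋆ → (V ⊔ Y)⋆` restricting to an iso `X• → Y•`. -/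
lemma nfus_iso_big (hF : IsFusionSystem ⊤ F) (hΩ : IsStratification ⊤ F Ω star)
    {f : S → S} {X Y : Subgroup S} (h : IsFIso (NFus F V) f X Y) :
    X ≤ (Subgroup.normalizer (V : Set S)) ∧ Y ≤ (Subgroup.normalizer (V : Set S)) ∧
      ∃ hh, IsFIso F hh (star (V ⊔ X)) (star (V ⊔ Y)) ∧
        Set.EqOn hh f (X : Set S) ∧ hh '' (V : Set S) = (V : Set S) ∧
        hh '' ((bulletStar star V X : Subgroup S) : Set S)
          = ((bulletStar star V Y : Subgroup S) : Set S) := by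
  obtain ⟨hX, hY, g, hgiso, heq, hgV⟩ := nfus_iso_extend hF h
  obtain ⟨hh, hhiso, hheq⟩ := hΩ.extend_star g (X ⊔ V) (Y ⊔ V) hgiso
  rw [sup_comm X V] at hhiso hheq
  rw [sup_comm Y V] at hhiso
  have hXsub : (X : Set S) ⊆ ((V ⊔ X : Subgroup S) : Set S) :=
    fun x hx => Subgroup.mem_sup_right hx
  have hVsub : (V : Set S) ⊆ ((V ⊔ X : Subgroup S) : Set S) :=
    fun x hx => Subgroup.mem_sup_left hx
  have hEqf : Set.EqOn hh f (X : Set S) :=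
    fun x hx => (hheq (hXsub hx)).trans (heq hx)
  have hhV : hh '' (V : Set S) = (V : Set S) := by
    rw [(hheq.mono hVsub).image_eq, hgV]
  have hVP : V ≤ star (V ⊔ X) := le_trans le_sup_left (hΩ.le_star _ le_top)
  have htrans := normalizer_transfer hF hhiso hVP hhV
  exact ⟨hX, hY, hh, hhiso, hEqf, hhV, htrans⟩

/-- Restriction of the big extension to an `N_F(V)`-isomorphism `X• → Y•`. -/
lemma nfus_iso_bullet (hF : IsFusionSystem ⊤ F) (hΩ : IsStratification ⊤ F Ω star)
    {f : S → S} {X Y : Subgroup S} (h : IsFIso (NFus F V) f X Y) :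
    ∃ hh, IsFIso (NFus F V) hh (bulletStar star V X) (bulletStar star V Y) ∧
      Set.EqOn hh f (X : Set S) ∧
      hh '' ((bulletStar star V X : Subgroup S) : Set S)
        = ((bulletStar star V Y : Subgroup S) : Set S) := by
  obtain ⟨hX, hY, hh, hhiso, hEqf, hhV, htrans⟩ := nfus_iso_big hF hΩ h
  have hmtb : Set.MapsTo hh ((bulletStar star V X : Subgroup S) : Set S)
      ((bulletStar star V Y : Subgroup S) : Set S) := by
    rw [← htrans]
    exact Set.mapsTo_image hh _
  have hFb : F hh (bulletStar star V X) (bulletStar star V Y) :=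
    hF.restrict_mem hh (star (V ⊔ X)) (star (V ⊔ Y)) _ _ hhiso.1
      inf_le_left inf_le_left hmtb
  have hbiso : IsFIso F hh (bulletStar star V X) (bulletStar star V Y) := ⟨hFb, htrans⟩
  have hΦ : NPhi F V hh (bulletStar star V X) (bulletStar star V Y) := by
    refine ⟨inf_le_right, inf_le_right, hbiso, hh, ?_, fun _ _ => rfl, hhV⟩
    rw [sup_eq_left.mpr (V_le_bullet hΩ hX), sup_eq_left.mpr (V_le_bullet hΩ hY)]
    exact hbiso
  exact ⟨hh, ⟨NPhi_le_NFus hΦ, htrans⟩, hEqf, htrans⟩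

lemma chain_prepend {Ω' : Set (Subgroup S)} {n : ℕ} (c : Fin (n + 1) → Subgroup S)
    (hc : StrictMono c) (hcΩ : ∀ i, c i ∈ Ω') (B : Subgroup S) (hB : B ∈ Ω')
    (hlt : B < c 0) :
    ∃ c' : Fin (n + 2) → Subgroup S, StrictMono c' ∧ ∀ i, c' i ∈ Ω' := by
  refine ⟨fun i => if h : (i : ℕ) = 0 then B else c ⟨(i : ℕ) - 1, by omega⟩, ?_, ?_⟩
  · intro i j hij
    have hij' : (i : ℕ) < (j : ℕ) := hij
    have hj : ¬ (j : ℕ) = 0 := by omega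
    by_cases hi : (i : ℕ) = 0
    · simp only [dif_pos hi, dif_neg hj]
      refine lt_of_lt_of_le hlt (hc.monotone ?_)
      show (0 : Fin (n + 1)) ≤ _
      simp [Fin.le_def]
    · simp only [dif_neg hi, dif_neg hj]
      apply hc
      show ((i : ℕ) - 1 : ℕ) < ((j : ℕ) - 1 : ℕ)
      omega
  · intro i
    dsimp only
    by_cases hi : (i : ℕ) = 0
    · rw [dif_pos hi]; exact hB
    · rw [dif_neg hi]; exact hcΩ _

lemma chain_append {Ω' : Set (Subgroup S)} {n : ℕ} (c : Fin (n + 1) → Subgroup S)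
    (hc : StrictMono c) (hcΩ : ∀ i, c i ∈ Ω') (T : Subgroup S) (hT : T ∈ Ω')
    (hlt : c (Fin.last n) < T) :
    ∃ c' : Fin (n + 2) → Subgroup S, StrictMono c' ∧ ∀ i, c' i ∈ Ω' := by
  refine ⟨fun i => if h : (i : ℕ) ≤ n then c ⟨(i : ℕ), by omega⟩ else T, ?_, ?_⟩
  · intro i j hij
    have hij' : (i : ℕ) < (j : ℕ) := hij
    have hi : (i : ℕ) ≤ n := by have := j.isLt; omega
    by_cases hj : (j : ℕ) ≤ n
    · simp only [dif_pos hi, dif_pos hj]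
      apply hc
      show ((i : ℕ) : ℕ) < ((j : ℕ) : ℕ)
      omega
    · simp only [dif_pos hi, dif_neg hj]
      refine lt_of_le_of_lt (hc.monotone ?_) hlt
      show _ ≤ Fin.last n
      simp only [Fin.le_def, Fin.last]
      exact hi

  · intro i
    dsimp only
    by_cases hi : (i : ℕ) ≤ n
    · rw [dif_pos hi]; exact hcΩ _
    · rw [dif_neg hi]; exact hT

end NFAux3
/-- Lemma 2.6, normalizer part. `(N_Ω(V), •)` is a stratification on
`N_F(V)`; the map `X ↦ X⋆` is an injective homomorphism of posets `N_Ω(V) → Ω`; and if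
`dim(N_Ω(V)) = dim(Ω)` then `V ≤ 1⋆` and `R⋆ = S`, where `R = N_S(V)`. -/
theorem stratification_on_normalizer
    {S : Type*} [Group S] (F : HomPred S)
    (Ω : Set (Subgroup S)) (star : Subgroup S → Subgroup S)
    (hF : IsFusionSystem ⊤ F) (hΩ : IsStratification ⊤ F Ω star)
    (V : Subgroup S) :
    IsStratification (Subgroup.normalizer (V : Set S)) (NFus F V) (bulletOmega star V) (bulletStar star V) ∧
    ((∀ A ∈ bulletOmega star V, star A ∈ Ω) ∧
      (∀ A ∈ bulletOmega star V, ∀ B ∈ bulletOmega star V, A ≤ B → star A ≤ star B) ∧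
      Set.InjOn star (bulletOmega star V)) ∧
    (dimOmega (bulletOmega star V) = dimOmega Ω →
      V ≤ star ⊥ ∧ star (Subgroup.normalizer (V : Set S)) = ⊤) := by
  obtain ⟨N, hN⟩ := hΩ.finDim
  refine ⟨?_, ⟨fun A _ => hΩ.star_mem A le_top,
      fun A _ B _ hAB => hΩ.star_mono A B le_top le_top hAB,
      bullet_star_injOn hΩ⟩, ?_⟩
  · constructor
    · rintro A ⟨X, hX, rfl⟩
      exact inf_le_right
    · exact fun X hX => ⟨X, hX, rfl⟩
    · rintro A ⟨X, hX, rfl⟩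
      exact bullet_idem hΩ hX
    · intro X Y hX hY hXY
      exact inf_le_inf_right _ (hΩ.star_mono _ _ le_top le_top (sup_le_sup_left hXY V))
    · refine ⟨N, ?_⟩
      rintro n ⟨c, hc, hcΩ⟩
      exact hN n ⟨fun i => star (c i), bullet_chain_strictMono hΩ hc hcΩ,
        fun i => hΩ.star_mem _ le_top⟩
    · -- conj_invariant
      rintro A ⟨X0, hX0, rfl⟩ f Y hiso
      obtain ⟨hh, hhiso, hEqf, htrans⟩ := nfus_iso_bullet hF hΩ hiso
      have hYR : Y ≤ (Subgroup.normalizer (V : Set S)) := (NFus_le_NE hF hiso.1).2.1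
      rw [bullet_idem hΩ hX0] at htrans
      have h1 : hh '' ((bulletStar star V X0 : Subgroup S) : Set S) = (Y : Set S) := by
        rw [hEqf.image_eq, hiso.2]
      have h2 : (Y : Set S) = ((bulletStar star V Y : Subgroup S) : Set S) := by
        rw [← h1, htrans]
      exact ⟨Y, hYR, SetLike.coe_injective h2⟩
    · exact fun X hX => le_trans le_sup_right (sup_le_bullet hΩ hX)
    · -- extend_star
      intro f X Y hiso
      obtain ⟨hh, hhiso, hEqf, _⟩ := nfus_iso_bullet hF hΩ hiso
      exact ⟨hh, hhiso, hEqf⟩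
  · -- dimension statement
    intro hdim
    have hbddΩ : BddAbove {n | ∃ c : Fin (n + 1) → Subgroup S,
        StrictMono c ∧ ∀ i, c i ∈ Ω} := ⟨N, fun n hn => hN n hn⟩
    have hbddB : BddAbove {n | ∃ c : Fin (n + 1) → Subgroup S,
        StrictMono c ∧ ∀ i, c i ∈ bulletOmega star V} := by
      refine ⟨N, ?_⟩
      rintro n ⟨c, hc, hcΩ⟩
      exact hN n ⟨fun i => star (c i), bullet_chain_strictMono hΩ hc hcΩ,
        fun i => hΩ.star_mem _ le_top⟩
    have hneB : {n | ∃ c : Fin (n + 1) → Subgroup S,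
        StrictMono c ∧ ∀ i, c i ∈ bulletOmega star V}.Nonempty := by
      refine ⟨0, fun _ => bulletStar star V ⊥, ?_, fun _ => ⟨⊥, bot_le, rfl⟩⟩
      intro i j hij
      exfalso
      have h1 : (i : ℕ) < (j : ℕ) := hij
      have h2 : (j : ℕ) < 1 := j.isLt
      omega
    have hmem : ∃ c : Fin (dimOmega (bulletOmega star V) + 1) → Subgroup S,
        StrictMono c ∧ ∀ i, c i ∈ bulletOmega star V := Nat.sSup_mem hneB hbddB
    obtain ⟨c, hc, hcΩ⟩ := hmem
    have hdstrict := bullet_chain_strictMono hΩ hc hcΩ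
    have hdΩ : ∀ i, star (c i) ∈ Ω := fun i => hΩ.star_mem _ le_top
    constructor
    · by_contra hV
      have hVle0 : V ≤ star (c 0) := by
        obtain ⟨X0, hX0, hc0⟩ := hcΩ 0
        rw [hc0, star_bullet hΩ hX0]
        exact le_trans le_sup_left (hΩ.le_star _ le_top)
      have hlt : star (⊥ : Subgroup S) < star (c 0) :=
        lt_of_le_of_ne (hΩ.star_mono _ _ le_top le_top bot_le)
          (fun he => hV (by rw [he]; exact hVle0))
      obtain ⟨c', hc', hc'Ω⟩ :=
        chain_prepend _ hdstrict hdΩ (star ⊥) (hΩ.star_mem ⊥ le_top) hlt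
      have hle : dimOmega (bulletOmega star V) + 1 ≤ dimOmega Ω :=
        le_csSup hbddΩ ⟨c', hc', hc'Ω⟩
      rw [← hdim] at hle
      omega
    · by_contra hRtop
      have htopfix : star (⊤ : Subgroup S) = ⊤ :=
        le_antisymm le_top (hΩ.le_star ⊤ le_top)
      have htopΩ : (⊤ : Subgroup S) ∈ Ω := htopfix ▸ hΩ.star_mem ⊤ le_top
      have hlast : star (c (Fin.last _)) < ⊤ := by
        obtain ⟨Xl, hXl, hcl⟩ := hcΩ (Fin.last _)
        rw [hcl, star_bullet hΩ hXl]
        refine lt_of_le_of_lt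
          (hΩ.star_mono _ _ le_top le_top (sup_le Subgroup.le_normalizer hXl)) ?_
        exact lt_top_iff_ne_top.mpr hRtop
      obtain ⟨c', hc', hc'Ω⟩ := chain_append _ hdstrict hdΩ ⊤ htopΩ hlast
      have hle : dimOmega (bulletOmega star V) + 1 ≤ dimOmega Ω :=
        le_csSup hbddΩ ⟨c', hc', hc'Ω⟩
      rw [← hdim] at hle
      omega
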